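/- Let p(x,t) = (λe^{−λt}/(2πc))·e^{(λ/c)√(c²t² − ‖x‖²)}/√(c²t² − ‖x‖²) for x ∈ ℝ² with ‖x‖ < ct. Then for 0 < r < ct, ∫_{‖x‖<r} p(x,t) dx = e^{−λt}·(e^{λt} − e^{(λ/c)√(c²t² − r²)}) = 1 − exp{−λt + (λ/c)√(c²t² − r²)}. -/

import Mathlib

open Real MeasureTheory Set

theorem planar_flight_disc_probability
    (c l t r : ℝ) (hc : 0 < c) (hl : 0 < l) (ht : 0 < t)
    (hr0 : 0 < r) (hr : r < c * t) :
    ∫ x in Metric.ball (0 : EuclideanSpace ℝ (Fin 2)) r,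
        (l * Real.exp (-l * t) / (2 * Real.pi * c)) *
          Real.exp ((l / c) * Real.sqrt (c ^ 2 * t ^ 2 - ‖x‖ ^ 2)) /
          Real.sqrt (c ^ 2 * t ^ 2 - ‖x‖ ^ 2) =
      1 - Real.exp (-l * t + (l / c) * Real.sqrt (c ^ 2 * t ^ 2 - r ^ 2)) := by
  have hct : 0 < c * t := mul_pos hc ht
  set K : ℝ := l * Real.exp (-l * t) / (2 * Real.pi * c) with hK
  set g : ℝ → ℝ := fun s => K * Real.exp ((l / c) * Real.sqrt (c ^ 2 * t ^ 2 - s ^ 2)) /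
      Real.sqrt (c ^ 2 * t ^ 2 - s ^ 2) with hg
  -- 1D interval integral
  have oneD : ∫ y in (0:ℝ)..r, y * (Real.exp ((l / c) * Real.sqrt (c ^ 2 * t ^ 2 - y ^ 2)) /
        Real.sqrt (c ^ 2 * t ^ 2 - y ^ 2)) =
      (c / l) * (Real.exp (l * t) - Real.exp ((l / c) * Real.sqrt (c ^ 2 * t ^ 2 - r ^ 2))) := by
    set F : ℝ → ℝ := fun s => -(c / l) * Real.exp ((l / c) * Real.sqrt (c ^ 2 * t ^ 2 - s ^ 2))
      with hF
    have key : ∀ s ∈ Set.uIcc (0:ℝ) r, 0 < c ^ 2 * t ^ 2 - s ^ 2 := by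
      intro s hs
      rw [Set.uIcc_of_le hr0.le] at hs
      have h1 : s ^ 2 ≤ r ^ 2 := by nlinarith [hs.1, hs.2]
      nlinarith
    have hderiv : ∀ s ∈ Set.uIcc (0:ℝ) r, HasDerivAt F
        (s * (Real.exp ((l / c) * Real.sqrt (c ^ 2 * t ^ 2 - s ^ 2)) /
          Real.sqrt (c ^ 2 * t ^ 2 - s ^ 2))) s := by
      intro s hs
      have hpos := key s hs
      have hu : 0 < Real.sqrt (c ^ 2 * t ^ 2 - s ^ 2) := Real.sqrt_pos.2 hpos
      have h1 : HasDerivAt (fun y : ℝ => c ^ 2 * t ^ 2 - y ^ 2) (-(2 * s)) s := by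
        simpa using ((hasDerivAt_pow 2 s).const_sub (c ^ 2 * t ^ 2))
      have h2 : HasDerivAt (fun y : ℝ => Real.sqrt (c ^ 2 * t ^ 2 - y ^ 2))
          (-(2 * s) / (2 * Real.sqrt (c ^ 2 * t ^ 2 - s ^ 2))) s := by
        have := (Real.hasDerivAt_sqrt hpos.ne').comp s h1
        refine this.congr_deriv ?_
        have : Real.sqrt (c ^ 2 * t ^ 2 - s ^ 2) ≠ 0 := hu.ne'
        field_simp
      have h3 := (((h2.const_mul (l / c)).exp).const_mul (-(c / l)))
      refine h3.congr_deriv ?_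
      have : Real.sqrt (c ^ 2 * t ^ 2 - s ^ 2) ≠ 0 := hu.ne'
      field_simp
    have hcont : ContinuousOn (fun y : ℝ => y * (Real.exp ((l / c) *
        Real.sqrt (c ^ 2 * t ^ 2 - y ^ 2)) / Real.sqrt (c ^ 2 * t ^ 2 - y ^ 2)))
        (Set.uIcc (0:ℝ) r) := by
      apply ContinuousOn.mul continuousOn_id
      apply ContinuousOn.div
      · exact (Real.continuous_exp.comp (continuous_const.mul
          ((continuous_const.sub (continuous_pow 2)).sqrt))).continuousOn
      · exact ((continuous_const.sub (continuous_pow 2)).sqrt).continuousOn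
      · intro s hs
        exact (Real.sqrt_pos.2 (key s hs)).ne'
    rw [intervalIntegral.integral_eq_sub_of_hasDerivAt hderiv (hcont.intervalIntegrable)]
    have h0 : Real.sqrt (c ^ 2 * t ^ 2 - 0 ^ 2) = c * t := by
      rw [show c ^ 2 * t ^ 2 - 0 ^ 2 = (c * t) ^ 2 by ring, Real.sqrt_sq hct.le]
    rw [hF]
    simp only [h0]
    have h1 : (l / c) * (c * t) = l * t := by field_simp
    rw [h1]
    ring
  -- radial reduction
  have step1 : (∫ x in Metric.ball (0 : EuclideanSpace ℝ (Fin 2)) r, g ‖x‖) =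
      ∫ x : EuclideanSpace ℝ (Fin 2), (Set.indicator (Set.Iio r) g) ‖x‖ := by
    rw [← integral_indicator measurableSet_ball]
    congr 1
    funext x
    by_cases hx : ‖x‖ < r <;> simp [Set.indicator, mem_ball_zero_iff, hx]
  have step2 := MeasureTheory.integral_fun_norm_addHaar
      (volume : Measure (EuclideanSpace ℝ (Fin 2))) (Set.indicator (Set.Iio r) g)
  have hrank : Module.finrank ℝ (EuclideanSpace ℝ (Fin 2)) = 2 := by
    simp [finrank_euclideanSpace]
  rw [hrank] at step2
  have hvol : (volume (Metric.ball (0 : EuclideanSpace ℝ (Fin 2)) 1)).toReal = Real.pi := by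
    rw [EuclideanSpace.volume_ball]
    norm_num [Real.Gamma_two, Real.sq_sqrt Real.pi_pos.le, ENNReal.toReal_ofReal Real.pi_pos.le]
  rw [measureReal_def, hvol] at step2
  -- the Ioi integral
  have step3 : (∫ y in Set.Ioi (0:ℝ), y ^ (2 - 1) • Set.indicator (Set.Iio r) g y) =
      K * ((c / l) * (Real.exp (l * t) -
        Real.exp ((l / c) * Real.sqrt (c ^ 2 * t ^ 2 - r ^ 2)))) := by
    have e1 : ∀ y : ℝ, y ^ (2 - 1) • Set.indicator (Set.Iio r) g y =
        Set.indicator (Set.Iio r) (fun y => y * g y) y := by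
      intro y
      by_cases hy : y < r <;> simp [Set.indicator, hy]
    simp only [e1]
    rw [setIntegral_indicator measurableSet_Iio, Set.Ioi_inter_Iio,
      ← MeasureTheory.integral_Ioc_eq_integral_Ioo,
      ← intervalIntegral.integral_of_le hr0.le]
    rw [show (fun y : ℝ => y * g y) = fun y : ℝ =>
        K * (y * (Real.exp ((l / c) * Real.sqrt (c ^ 2 * t ^ 2 - y ^ 2)) /
          Real.sqrt (c ^ 2 * t ^ 2 - y ^ 2))) from by funext y; rw [hg]; ring]
    rw [intervalIntegral.integral_const_mul, oneD]
  have lhs_eq : (∫ x in Metric.ball (0 : EuclideanSpace ℝ (Fin 2)) r,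
      K * Real.exp ((l / c) * Real.sqrt (c ^ 2 * t ^ 2 - ‖x‖ ^ 2)) /
        Real.sqrt (c ^ 2 * t ^ 2 - ‖x‖ ^ 2)) =
      2 * (Real.pi * (K * ((c / l) * (Real.exp (l * t) -
        Real.exp ((l / c) * Real.sqrt (c ^ 2 * t ^ 2 - r ^ 2)))))) := by
    calc (∫ x in Metric.ball (0 : EuclideanSpace ℝ (Fin 2)) r,
        K * Real.exp ((l / c) * Real.sqrt (c ^ 2 * t ^ 2 - ‖x‖ ^ 2)) /
          Real.sqrt (c ^ 2 * t ^ 2 - ‖x‖ ^ 2))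
        = ∫ x in Metric.ball (0 : EuclideanSpace ℝ (Fin 2)) r, g ‖x‖ := rfl
      _ = ∫ x : EuclideanSpace ℝ (Fin 2), (Set.indicator (Set.Iio r) g) ‖x‖ := step1
      _ = _ := by
        rw [step2, step3]
        simp [smul_eq_mul]
  rw [lhs_eq, hK, Real.exp_add]
  have h1 : Real.exp (-(l * t)) * Real.exp (l * t) = 1 := by
    rw [← Real.exp_add]; simp
  have hpi : Real.pi ≠ 0 := Real.pi_ne_zero
  field_simp
  linear_combination h1
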